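/- Let (Ω, P) be a probability space, and let μ be a Borel probability measure on ℝ supported on [0, 1] with density ρ with respect to Lebesgue measure. Suppose f : Ω × ℝ → ℝ is measurable, and for each ω ∈ Ω the map f_ω = f(ω, ·) restricts to a strictly increasing C¹ bijection of [0, 1] onto itself with strictly positive derivative. Assume the stationarity condition: for every Borel set A ⊆ [0, 1], ∫_Ω μ(f_ω^{-1}(A)) dP(ω) = μ(A) (i.e., the P-average of the pushforward measures (f_ω)_*μ equals μ). Assume also that (ω, x) ↦ log f_ω'(x) is integrable with respect to P ⊗ μ and that x ↦ log ρ(x) is μ-integrable. Then ∫_Ω ∫_{[0,1]} log f_ω'(x) dμ(x) dP(ω) ≤ 0. -/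

import Mathlib

open MeasureTheory Set Filter Topology
open scoped ENNReal

private lemma aux_measurable_deriv {Ω : Type*} [MeasurableSpace Ω]
    (f : Ω × ℝ → ℝ) (hf : Measurable f)
    (hC1 : ∀ ω : Ω, ContDiffOn ℝ 1 (fun x => f (ω, x)) (Set.Icc 0 1)) :
    ∃ D : Ω × ℝ → ℝ, Measurable D ∧
      ∀ ω, ∀ x ∈ Set.Icc (0:ℝ) 1,
        D (ω, x) = derivWithin (fun y => f (ω, y)) (Set.Icc 0 1) x := by
  have hs : MeasurableSet (Set.Icc (0:ℝ) 1) := measurableSet_Icc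
  have hUDO : UniqueDiffOn ℝ (Set.Icc (0:ℝ) 1) := uniqueDiffOn_Icc zero_lt_one
  have hD : ∀ ω, ∀ x ∈ Set.Icc (0:ℝ) 1,
      HasDerivWithinAt (fun y => f (ω, y))
        (derivWithin (fun y => f (ω, y)) (Set.Icc 0 1) x) (Set.Icc 0 1) x :=
    fun ω x hx => (((hC1 ω).differentiableOn one_ne_zero) x hx).hasDerivWithinAt
  -- measurability in ω for each fixed x ∈ Icc 0 1
  have hmx : ∀ x : Set.Icc (0:ℝ) 1,
      Measurable fun ω => derivWithin (fun y => f (ω, y)) (Set.Icc 0 1) (x : ℝ) := by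
    rintro ⟨x, hx⟩
    obtain ⟨hx0, hx1⟩ := hx
    obtain ⟨y, hy_mem, hy_ne, hy_tendsto⟩ :
        ∃ y : ℕ → ℝ, (∀ n, y n ∈ Set.Icc (0:ℝ) 1) ∧ (∀ n, y n ≠ x) ∧
          Tendsto y atTop (𝓝 x) := by
      rcases lt_or_eq_of_le hx1 with h1 | h1
      · refine ⟨fun n => x + (1 - x) / (n + 2), fun n => ?_, fun n => ?_, ?_⟩
        · have hpos : (0:ℝ) < (1 - x) / (n + 2) := div_pos (by linarith) (by positivity)
          have hle : (1 - x) / (n + 2) ≤ 1 - x := by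
            apply div_le_self (by linarith)
            have : (0:ℝ) ≤ (n:ℝ) := Nat.cast_nonneg n
            linarith
          constructor <;> [linarith; linarith]
        · have hpos : (0:ℝ) < (1 - x) / (n + 2) := div_pos (by linarith) (by positivity)
          intro h; nlinarith [h]
        · have : Tendsto (fun n : ℕ => (1 - x) / (n + 2)) atTop (𝓝 0) := by
            apply Tendsto.div_atTop tendsto_const_nhds
            exact tendsto_atTop_add_const_right _ 2 tendsto_natCast_atTop_atTop
          simpa using tendsto_const_nhds.add this
      · refine ⟨fun n => x - x / (n + 2), fun n => ?_, fun n => ?_, ?_⟩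
        · have hx0' : (0:ℝ) < x := by rw [h1]; norm_num
          have hpos : (0:ℝ) < x / (n + 2) := by positivity
          have hle : x / (n + 2) ≤ x := by
            apply div_le_self hx0'.le
            have : (0:ℝ) ≤ (n:ℝ) := Nat.cast_nonneg n
            linarith
          constructor <;> [linarith; linarith]
        · have hx0' : (0:ℝ) < x := by rw [h1]; norm_num
          have hpos : (0:ℝ) < x / (n + 2) := by positivity
          intro h; nlinarith [h]
        · have : Tendsto (fun n : ℕ => x / (n + 2)) atTop (𝓝 0) := by
            apply Tendsto.div_atTop tendsto_const_nhds
            exact tendsto_atTop_add_const_right _ 2 tendsto_natCast_atTop_atTop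
          simpa using tendsto_const_nhds.sub this
    have hy_tendsto' : Tendsto y atTop (𝓝[Set.Icc (0:ℝ) 1 \ {x}] x) := by
      refine tendsto_nhdsWithin_iff.mpr ⟨hy_tendsto, Eventually.of_forall fun n => ⟨hy_mem n, ?_⟩⟩
      simpa using hy_ne n
    apply measurable_of_tendsto_metrizable
      (f := fun n ω => (f (ω, y n) - f (ω, x)) / (y n - x))
    · intro n
      apply Measurable.div_const
      exact (hf.comp (measurable_id.prodMk measurable_const)).sub
        (hf.comp (measurable_id.prodMk measurable_const))
    · rw [tendsto_pi_nhds]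
      intro ω
      have hslope := hasDerivWithinAt_iff_tendsto_slope.mp (hD ω x ⟨hx0, hx1⟩)
      have := hslope.comp hy_tendsto'
      simpa [Function.comp_def, slope_def_field] using this
  -- Carathéodory: joint measurability on (Icc 0 1) × Ω
  set u : Set.Icc (0:ℝ) 1 → Ω → ℝ :=
    fun x ω => derivWithin (fun y => f (ω, y)) (Set.Icc 0 1) (x : ℝ) with hu
  have hu_cont : ∀ ω, Continuous fun x : Set.Icc (0:ℝ) 1 => u x ω := by
    intro ω
    exact ContinuousOn.restrict ((hC1 ω).continuousOn_derivWithin hUDO le_rfl)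
  have huncurry : Measurable (Function.uncurry u) :=
    measurable_uncurry_of_continuous_of_measurable hu_cont hmx
  -- extend to Ω × ℝ
  set e : Ω × Set.Icc (0:ℝ) 1 → Ω × ℝ := fun q => (q.1, (q.2 : ℝ)) with he_def
  have he : MeasurableEmbedding e :=
    MeasurableEmbedding.prodMap MeasurableEmbedding.id (MeasurableEmbedding.subtype_coe hs)
  refine ⟨Function.extend e (fun q => u q.2 q.1) 0, ?_, ?_⟩
  · exact he.measurable_extend (huncurry.comp (measurable_snd.prodMk measurable_fst))
      measurable_const
  · intro ω x hx
    have : e (ω, ⟨x, hx⟩) = (ω, x) := rfl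
    rw [← this, he.injective.extend_apply]

private lemma aux_density (ρ : ℝ → ℝ) (μ : Measure ℝ) [IsProbabilityMeasure μ]
    (hμρ : μ = volume.withDensity (fun x => ENNReal.ofReal (ρ x))) :
    ∃ g : ℝ → ℝ≥0∞, Measurable g ∧ (∀ x, g x ≤ ENNReal.ofReal (ρ x)) ∧
      μ = volume.withDensity g := by
  obtain ⟨g, gm, gle, geq⟩ := exists_measurable_le_lintegral_eq volume
    (fun x => ENNReal.ofReal (ρ x))
  refine ⟨g, gm, gle, ?_⟩
  have htot : ∫⁻ x, ENNReal.ofReal (ρ x) ∂volume = 1 := by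
    have h := (measure_univ (μ := μ))
    rw [hμρ, withDensity_apply _ MeasurableSet.univ, Measure.restrict_univ] at h
    exact h
  have htotg : ∫⁻ x, g x ∂volume = 1 := geq ▸ htot
  rw [hμρ]
  ext A hA
  rw [withDensity_apply _ hA, withDensity_apply _ hA]
  by_contra hne
  have hmono : ∫⁻ x in A, g x ∂volume ≤ ∫⁻ x in A, ENNReal.ofReal (ρ x) ∂volume :=
    lintegral_mono fun x => gle x
  have hlt : ∫⁻ x in A, g x ∂volume < ∫⁻ x in A, ENNReal.ofReal (ρ x) ∂volume :=
    lt_of_le_of_ne hmono fun h => hne h.symm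
  have hmono' : ∫⁻ x in Aᶜ, g x ∂volume ≤ ∫⁻ x in Aᶜ, ENNReal.ofReal (ρ x) ∂volume :=
    lintegral_mono fun x => gle x
  have hfin : ∫⁻ x in Aᶜ, g x ∂volume ≠ ⊤ := by
    refine ne_of_lt (lt_of_le_of_lt ?_ (by norm_num : (1:ℝ≥0∞) < ⊤))
    rw [← htotg]
    exact setLIntegral_le_lintegral _ _
  have hsum : ∫⁻ x in A, g x ∂volume + ∫⁻ x in Aᶜ, g x ∂volume
      < ∫⁻ x in A, ENNReal.ofReal (ρ x) ∂volume + ∫⁻ x in Aᶜ, ENNReal.ofReal (ρ x) ∂volume :=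
    ENNReal.add_lt_add_of_lt_of_le hfin hlt hmono'
  rw [lintegral_add_compl _ hA, lintegral_add_compl _ hA, htot, htotg] at hsum
  exact lt_irrefl _ hsum

/-- For a family of random strictly increasing C¹ circle/interval maps
`f_ω : [0,1] → [0,1]` with positive derivative, if the probability measure `μ` (with
density `ρ` w.r.t. Lebesgue, supported on `[0,1]`) is stationary on average, then the
average Lyapunov exponent `∫∫ log f_ω'(x) dμ dP` is nonpositive. -/
theorem stmt_11 {Ω : Type*} [MeasurableSpace Ω] (P : Measure Ω)
    [IsProbabilityMeasure P]
    (ρ : ℝ → ℝ) (hρ : ∀ x, 0 ≤ ρ x)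
    (μ : Measure ℝ) [IsProbabilityMeasure μ]
    (hμρ : μ = volume.withDensity (fun x => ENNReal.ofReal (ρ x)))
    (hsupp : μ ((Set.Icc (0:ℝ) 1)ᶜ) = 0)
    (f : Ω × ℝ → ℝ) (hf : Measurable f)
    (hmono : ∀ ω : Ω, StrictMonoOn (fun x => f (ω, x)) (Set.Icc 0 1))
    (hbij : ∀ ω : Ω, Set.BijOn (fun x => f (ω, x)) (Set.Icc 0 1) (Set.Icc 0 1))
    (hC1 : ∀ ω : Ω, ContDiffOn ℝ 1 (fun x => f (ω, x)) (Set.Icc 0 1))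
    (hpos : ∀ ω : Ω, ∀ x ∈ Set.Icc (0:ℝ) 1,
      0 < derivWithin (fun x => f (ω, x)) (Set.Icc 0 1) x)
    (hstat : ∀ A : Set ℝ, MeasurableSet A → A ⊆ Set.Icc 0 1 →
      ∫⁻ ω, μ ((fun x => f (ω, x)) ⁻¹' A) ∂P = μ A)
    (hint : Integrable
      (fun p : Ω × ℝ => Real.log (derivWithin (fun x => f (p.1, x)) (Set.Icc 0 1) p.2))
      (P.prod μ))
    (hlogρ : Integrable (fun x => Real.log (ρ x)) μ) :
    ∫ ω, ∫ x, Real.log (derivWithin (fun x => f (ω, x)) (Set.Icc 0 1) x) ∂μ ∂P ≤ 0 := by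
  have hIcc : MeasurableSet (Set.Icc (0:ℝ) 1) := measurableSet_Icc
  have hfω : ∀ ω : Ω, Measurable fun x => f (ω, x) :=
    fun ω => hf.comp (measurable_const.prodMk measurable_id)
  -- the measurable density
  obtain ⟨g, gm, gle, hgd⟩ := aux_density ρ μ hμρ
  have gfin : ∀ x, g x ≠ ⊤ := fun x => (lt_of_le_of_lt (gle x) ENNReal.ofReal_lt_top).ne
  set σ : ℝ → ℝ := fun x => (g x).toReal with hσ_def
  have hσm : Measurable σ := gm.ennreal_toReal
  have hgσ : ∀ x, g x = ENNReal.ofReal (σ x) := fun x => (ENNReal.ofReal_toReal (gfin x)).symm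
  have hσρ : ∀ x, σ x ≤ ρ x := fun x => ENNReal.toReal_le_of_le_ofReal (hρ x) (gle x)
  have hσ0 : ∀ x, 0 ≤ σ x := fun x => ENNReal.toReal_nonneg
  -- μ gives full mass to Icc 0 1, and μ S = μ (S ∩ Icc 0 1)
  have hμinter : ∀ S : Set ℝ, MeasurableSet S → μ S = μ (S ∩ Set.Icc 0 1) := by
    intro S hS
    have h1 : μ (S ∩ Set.Icc 0 1) + μ (S \ Set.Icc 0 1) = μ S := measure_inter_add_diff S hIcc
    have h2 : μ (S \ Set.Icc 0 1) = 0 :=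
      measure_mono_null (diff_subset_compl _ _) hsupp
    rw [h2, add_zero] at h1
    exact h1.symm
  -- the average pushforward equals μ
  have hmap : Measure.map f (P.prod μ) = μ := by
    ext A hA
    rw [Measure.map_apply hf hA, Measure.prod_apply (hf hA)]
    have hA' : MeasurableSet (A ∩ Set.Icc 0 1) := hA.inter hIcc
    have step : ∀ ω, μ (Prod.mk ω ⁻¹' (f ⁻¹' A))
        = μ ((fun x => f (ω, x)) ⁻¹' (A ∩ Set.Icc 0 1)) := by
      intro ω
      have h1 : Prod.mk ω ⁻¹' (f ⁻¹' A) = (fun x => f (ω, x)) ⁻¹' A := rfl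
      rw [h1, hμinter _ ((hfω ω) hA), hμinter _ ((hfω ω) hA')]
      congr 1
      ext x
      simp only [Set.mem_inter_iff, Set.mem_preimage]
      constructor
      · rintro ⟨hfa, hx⟩
        exact ⟨⟨hfa, (hbij ω).mapsTo hx⟩, hx⟩
      · rintro ⟨⟨hfa, _⟩, hx⟩
        exact ⟨hfa, hx⟩
    rw [lintegral_congr step, hstat (A ∩ Set.Icc 0 1) hA' inter_subset_right,
      ← hμinter A hA]
  have hμs : μ (Set.Icc (0:ℝ) 1) = 1 := by
    have h := measure_add_measure_compl (μ := μ) hIcc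
    rw [hsupp, add_zero, measure_univ] at h
    exact h
  -- a.e. facts
  have hsnd_map : Measure.map Prod.snd (P.prod μ) = μ := by
    rw [Measure.map_snd_prod, measure_univ, one_smul]
  have hae_mem : ∀ᵐ p : Ω × ℝ ∂(P.prod μ), p.2 ∈ Set.Icc (0:ℝ) 1 := by
    rw [ae_iff]
    have : {p : Ω × ℝ | ¬ p.2 ∈ Set.Icc (0:ℝ) 1} = Prod.snd ⁻¹' (Set.Icc (0:ℝ) 1)ᶜ := rfl
    rw [this, ← Measure.map_apply measurable_snd hIcc.compl, hsnd_map]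
    exact hsupp
  set Z : Set ℝ := {x | g x = 0} with hZ_def
  have hZm : MeasurableSet Z := gm (measurableSet_singleton 0)
  have hμZ : μ Z = 0 := by
    rw [hgd, withDensity_apply _ hZm,
      setLIntegral_congr_fun hZm (fun x hx => hx)]
    simp
  have hσposZ : ∀ x : ℝ, x ∉ Z → 0 < σ x := by
    intro x hx
    exact ENNReal.toReal_pos (fun h => hx h) (gfin x)
  have hae_σpos_μ : ∀ᵐ x ∂μ, 0 < σ x := by
    rw [ae_iff]
    refine measure_mono_null (fun x hx => ?_) hμZ
    simp only [Set.mem_setOf_eq, not_lt] at hx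
    by_contra hxZ
    exact absurd (hσposZ x hxZ) (not_lt.mpr hx)
  have hae_σpos_snd : ∀ᵐ p : Ω × ℝ ∂(P.prod μ), 0 < σ p.2 := by
    rw [ae_iff]
    refine measure_mono_null (fun p hp => ?_)
      (show (P.prod μ) (Prod.snd ⁻¹' Z) = 0 by
        rw [← Measure.map_apply measurable_snd hZm, hsnd_map]; exact hμZ)
    simp only [Set.mem_setOf_eq, not_lt] at hp
    by_contra hpZ
    exact absurd (hσposZ p.2 hpZ) (not_lt.mpr hp)
  have hae_σpos_f : ∀ᵐ p : Ω × ℝ ∂(P.prod μ), 0 < σ (f p) := by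
    rw [ae_iff]
    refine measure_mono_null (fun p hp => ?_)
      (show (P.prod μ) (f ⁻¹' Z) = 0 by
        rw [← Measure.map_apply hf hZm, hmap]; exact hμZ)
    simp only [Set.mem_setOf_eq, not_lt] at hp
    by_contra hpZ
    exact absurd (hσposZ (f p) hpZ) (not_lt.mpr hp)
  -- ρ = σ a.e.
  have hρσ : (fun x => ρ x) =ᵐ[μ] σ := by
    obtain ⟨m, hm_meas, hm_eq⟩ := hlogρ.aestronglyMeasurable
    set ρt : ℝ → ℝ := fun x => Real.exp (m x) with hρt_def
    have hρtm : Measurable ρt := Real.measurable_exp.comp hm_meas.measurable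
    have hae1 : ∀ᵐ x ∂μ, ρ x = ρt x := by
      filter_upwards [hm_eq, hae_σpos_μ] with x h1 h2
      have hρpos : 0 < ρ x := lt_of_lt_of_le h2 (hσρ x)
      show ρ x = Real.exp (m x)
      rw [← h1, Real.exp_log hρpos]
    set N : Set ℝ := toMeasurable μ {x | ρ x ≠ ρt x} with hN_def
    have hNm : MeasurableSet N := measurableSet_toMeasurable _ _
    have hμN : μ N = 0 := by
      rw [hN_def, measure_toMeasurable]
      exact ae_iff.mp hae1
    set B : Set ℝ := {x | σ x < ρt x} with hB_def
    have hBm : MeasurableSet B := measurableSet_lt hσm hρtm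
    set C : Set ℝ := B \ N with hC_def
    have hCm : MeasurableSet C := hBm.diff hNm
    have hCsub : ∀ x ∈ C, σ x < ρt x ∧ ρ x = ρt x := by
      rintro x ⟨hxB, hxN⟩
      exact ⟨hxB, not_not.mp fun h => hxN (subset_toMeasurable μ _ h)⟩
    have hC1' : μ C = ∫⁻ x in C, g x ∂volume := by rw [hgd, withDensity_apply _ hCm]
    have hC2' : μ C = ∫⁻ x in C, ENNReal.ofReal (ρ x) ∂volume := by
      rw [hμρ, withDensity_apply _ hCm]
    have hC3' : ∫⁻ x in C, ENNReal.ofReal (ρ x) ∂volume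
        = ∫⁻ x in C, ENNReal.ofReal (ρt x) ∂volume :=
      setLIntegral_congr_fun hCm (fun x hx => by rw [(hCsub x hx).2])
    have hle_onC : ∀ᵐ x ∂(volume.restrict C), g x ≤ ENNReal.ofReal (ρt x) := by
      rw [ae_restrict_iff' hCm]
      exact ae_of_all _ fun x hx => by
        rw [hgσ x]
        exact ENNReal.ofReal_le_ofReal (hCsub x hx).1.le
    have hgfinC : ∫⁻ x in C, g x ∂volume ≠ ⊤ := by
      rw [← hC1']
      exact (measure_lt_top μ C).ne
    have hzero : ∫⁻ x in C, (ENNReal.ofReal (ρt x) - g x) ∂volume = 0 := by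
      rw [lintegral_sub gm hgfinC hle_onC, ← hC3', ← hC2', hC1']
      exact tsub_self _
    have haez : ∀ᵐ x ∂(volume.restrict C), ENNReal.ofReal (ρt x) - g x = 0 :=
      (lintegral_eq_zero_iff (hρtm.ennreal_ofReal.sub gm)).mp hzero
    have hvolC : volume C = 0 := by
      have h1 : (volume.restrict C) {x | ¬ (ENNReal.ofReal (ρt x) - g x = 0)} = 0 :=
        ae_iff.mp haez
      have h2 : C ⊆ {x | ¬ (ENNReal.ofReal (ρt x) - g x = 0)} := by
        intro x hx
        have hlt : g x < ENNReal.ofReal (ρt x) := by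
          rw [hgσ x]
          exact ENNReal.ofReal_lt_ofReal_iff (lt_of_le_of_lt (hσ0 x) (hCsub x hx).1)
            |>.mpr (hCsub x hx).1
        simp only [Set.mem_setOf_eq]
        rw [tsub_eq_zero_iff_le]
        exact not_le.mpr hlt
      have := measure_mono_null h2 h1
      rwa [Measure.restrict_apply_self] at this
    have hμC : μ C = 0 := by
      rw [hC1', Measure.restrict_eq_zero.mpr hvolC, lintegral_zero_measure]
    have hμB : μ B = 0 := by
      have : B ⊆ C ∪ N := fun x hx => by
        by_cases hxN : x ∈ N
        · exact Or.inr hxN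
        · exact Or.inl ⟨hx, hxN⟩
      exact le_antisymm (le_trans (measure_mono this)
        (le_trans (measure_union_le _ _) (by rw [hμC, hμN, add_zero]))) zero_le
    have hae2 : ∀ᵐ x ∂μ, ρt x ≤ σ x := by
      rw [ae_iff]
      refine measure_mono_null (fun x hx => ?_) hμB
      simpa [hB_def] using hx
    filter_upwards [hae1, hae2] with x h1 h2
    exact le_antisymm (h1 ▸ h2) (hσρ x)
  have hlogσ : Integrable (fun x => Real.log (σ x)) μ :=
    hlogρ.congr (hρσ.mono fun x hx => by simp only []; rw [show ρ x = σ x from hx])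
  -- change of variables
  have hone : ∀ ω, ∫⁻ x in Set.Icc (0:ℝ) 1,
      ENNReal.ofReal (derivWithin (fun y => f (ω, y)) (Set.Icc 0 1) x) * g (f (ω, x))
        ∂volume = 1 := by
    intro ω
    have hD : ∀ x ∈ Set.Icc (0:ℝ) 1,
        HasDerivWithinAt (fun y => f (ω, y))
          (derivWithin (fun y => f (ω, y)) (Set.Icc 0 1) x) (Set.Icc 0 1) x :=
      fun x hx => (((hC1 ω).differentiableOn one_ne_zero) x hx).hasDerivWithinAt
    have hfd : ∀ x ∈ Set.Icc (0:ℝ) 1,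
        HasFDerivWithinAt (fun y => f (ω, y))
          ((1 : ℝ →L[ℝ] ℝ).smulRight (derivWithin (fun y => f (ω, y)) (Set.Icc 0 1) x))
          (Set.Icc 0 1) x :=
      fun x hx => (hD x hx).hasFDerivWithinAt
    have hcov := lintegral_image_eq_lintegral_abs_det_fderiv_mul volume hIcc hfd
      ((hmono ω).injOn) g
    rw [(hbij ω).image_eq] at hcov
    have hlhs : ∫⁻ x in Set.Icc (0:ℝ) 1, g x ∂volume = 1 := by
      rw [← withDensity_apply _ hIcc, ← hgd]
      exact hμs
    rw [hlhs] at hcov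
    calc ∫⁻ x in Set.Icc (0:ℝ) 1,
        ENNReal.ofReal (derivWithin (fun y => f (ω, y)) (Set.Icc 0 1) x) * g (f (ω, x))
          ∂volume
        = ∫⁻ x in Set.Icc (0:ℝ) 1,
            ENNReal.ofReal
              |((1 : ℝ →L[ℝ] ℝ).smulRight
                (derivWithin (fun y => f (ω, y)) (Set.Icc 0 1) x)).det| * g (f (ω, x))
          ∂volume := by
          apply setLIntegral_congr_fun hIcc
          intro x hx
          beta_reduce
          rw [ContinuousLinearMap.det_smulRight, ContinuousLinearMap.one_apply, one_mul, abs_of_pos (hpos ω x hx)]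
      _ = 1 := hcov.symm
  -- the measurable version of the derivative
  obtain ⟨D, hDm, hDeq⟩ := aux_measurable_deriv f hf hC1
  -- key lintegral bound
  have hT : ∫⁻ p : Ω × ℝ, ENNReal.ofReal (σ (f p) * D p / σ p.2) ∂(P.prod μ) ≤ 1 := by
    have hmeasI : Measurable fun p : Ω × ℝ => ENNReal.ofReal (σ (f p) * D p / σ p.2) :=
      (((hσm.comp hf).mul hDm).div (hσm.comp measurable_snd)).ennreal_ofReal
    rw [MeasureTheory.lintegral_prod _ hmeasI.aemeasurable]
    have haegs : ∀ᵐ x ∂(volume : Measure ℝ), x ∉ Set.Icc (0:ℝ) 1 → g x = 0 := by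
      have h0 : ∫⁻ x in (Set.Icc (0:ℝ) 1)ᶜ, g x ∂volume = 0 := by
        rw [← withDensity_apply _ hIcc.compl, ← hgd]; exact hsupp
      have h1 := (lintegral_eq_zero_iff gm).mp h0
      exact (ae_restrict_iff' hIcc.compl).mp h1
    have inner : ∀ ω, ∫⁻ x, ENNReal.ofReal (σ (f (ω, x)) * D (ω, x) / σ x) ∂μ ≤ 1 := by
      intro ω
      have hsec : Measurable fun x => ENNReal.ofReal (σ (f (ω, x)) * D (ω, x) / σ x) :=
        (((hσm.comp (hfω ω)).mul (hDm.comp measurable_prodMk_left)).div hσm).ennreal_ofReal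
      rw [hgd, lintegral_withDensity_eq_lintegral_mul volume gm hsec]
      have hb : ∀ᵐ x ∂(volume : Measure ℝ),
          (g * fun x => ENNReal.ofReal (σ (f (ω, x)) * D (ω, x) / σ x)) x
            ≤ (Set.Icc (0:ℝ) 1).indicator
                (fun x => ENNReal.ofReal (derivWithin (fun y => f (ω, y)) (Set.Icc 0 1) x)
                  * g (f (ω, x))) x := by
        filter_upwards [haegs] with x hgx
        by_cases hxs : x ∈ Set.Icc (0:ℝ) 1
        · rw [Set.indicator_of_mem hxs]
          simp only [Pi.mul_apply]
          by_cases hgz : g x = 0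
          · rw [hgz, zero_mul]; exact zero_le
          · have hσx : 0 < σ x := hσposZ x hgz
            have hd := hpos ω x hxs
            rw [hDeq ω x hxs, hgσ x, hgσ (f (ω, x)), ← ENNReal.ofReal_mul (hσ0 x),
              ← ENNReal.ofReal_mul hd.le]
            apply le_of_eq
            congr 1
            field_simp
        · rw [Set.indicator_of_notMem hxs]
          simp only [Pi.mul_apply]
          rw [hgx hxs, zero_mul]
      calc ∫⁻ x, (g * fun x => ENNReal.ofReal (σ (f (ω, x)) * D (ω, x) / σ x)) x ∂volume
          ≤ ∫⁻ x, (Set.Icc (0:ℝ) 1).indicator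
              (fun x => ENNReal.ofReal (derivWithin (fun y => f (ω, y)) (Set.Icc 0 1) x)
                * g (f (ω, x))) x ∂volume := lintegral_mono_ae hb
        _ = ∫⁻ x in Set.Icc (0:ℝ) 1,
              ENNReal.ofReal (derivWithin (fun y => f (ω, y)) (Set.Icc 0 1) x)
                * g (f (ω, x)) ∂volume := lintegral_indicator hIcc _
        _ = 1 := hone ω
    calc ∫⁻ ω, (∫⁻ x, ENNReal.ofReal (σ (f (ω, x)) * D (ω, x) / σ x) ∂μ) ∂P
        ≤ ∫⁻ _, 1 ∂P := lintegral_mono inner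
      _ = 1 := by simp
  -- final real-integral chain
  have hgoal : ∫ ω, ∫ x, Real.log (derivWithin (fun x => f (ω, x)) (Set.Icc 0 1) x) ∂μ ∂P
      = ∫ p : Ω × ℝ, Real.log (derivWithin (fun x => f (p.1, x)) (Set.Icc 0 1) p.2)
          ∂(P.prod μ) :=
    MeasureTheory.integral_integral hint
  rw [hgoal]
  have haeLD : (fun p : Ω × ℝ =>
        Real.log (derivWithin (fun x => f (p.1, x)) (Set.Icc 0 1) p.2))
      =ᵐ[P.prod μ] fun p => Real.log (D p) := by
    filter_upwards [hae_mem] with p hp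
    obtain ⟨ω, x⟩ := p
    simp only []
    rw [hDeq ω x hp]
  have hintD : Integrable (fun p : Ω × ℝ => Real.log (D p)) (P.prod μ) := hint.congr haeLD
  have hEint : ∫ p : Ω × ℝ, Real.log (derivWithin (fun x => f (p.1, x)) (Set.Icc 0 1) p.2)
      ∂(P.prod μ) = ∫ p : Ω × ℝ, Real.log (D p) ∂(P.prod μ) := integral_congr_ae haeLD
  have hmlogσ : ∀ m : Measure ℝ, AEStronglyMeasurable (fun y => Real.log (σ y)) m :=
    fun m => (Real.measurable_log.comp hσm).aestronglyMeasurable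
  have hIlogμ : Integrable (fun y => Real.log (σ y)) (Measure.map f (P.prod μ)) := by
    rwa [hmap]
  have hIlogf : Integrable (fun p : Ω × ℝ => Real.log (σ (f p))) (P.prod μ) :=
    (integrable_map_measure (hmlogσ _) hf.aemeasurable).mp hIlogμ
  have hEf : ∫ p : Ω × ℝ, Real.log (σ (f p)) ∂(P.prod μ) = ∫ y, Real.log (σ y) ∂μ := by
    have h := integral_map (μ := P.prod μ) hf.aemeasurable
      (hmlogσ (Measure.map f (P.prod μ)))
    rw [hmap] at h
    exact h.symm
  have hIlogμ2 : Integrable (fun y => Real.log (σ y)) (Measure.map Prod.snd (P.prod μ)) := by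
    rwa [hsnd_map]
  have hIlogsnd : Integrable (fun p : Ω × ℝ => Real.log (σ p.2)) (P.prod μ) :=
    (integrable_map_measure (hmlogσ _) measurable_snd.aemeasurable).mp hIlogμ2
  have hEsnd : ∫ p : Ω × ℝ, Real.log (σ p.2) ∂(P.prod μ) = ∫ y, Real.log (σ y) ∂μ := by
    have h := integral_map (μ := P.prod μ) (measurable_snd (α := Ω) (β := ℝ)).aemeasurable
      (hmlogσ (Measure.map Prod.snd (P.prod μ)))
    rw [hsnd_map] at h
    exact h.symm
  set W : Ω × ℝ → ℝ :=
    fun p => Real.log (D p) + Real.log (σ (f p)) - Real.log (σ p.2) with hW_def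
  have hWint : Integrable W (P.prod μ) := (hintD.add hIlogf).sub hIlogsnd
  have hWeq : ∫ p, W p ∂(P.prod μ) = ∫ p : Ω × ℝ, Real.log (D p) ∂(P.prod μ) := by
    have hadd : Integrable (fun p : Ω × ℝ => Real.log (D p) + Real.log (σ (f p)))
        (P.prod μ) := hintD.add hIlogf
    have h1 : ∫ p : Ω × ℝ, (Real.log (D p) + Real.log (σ (f p)) - Real.log (σ p.2))
        ∂(P.prod μ)
        = (∫ p : Ω × ℝ, (Real.log (D p) + Real.log (σ (f p))) ∂(P.prod μ))
          - ∫ p : Ω × ℝ, Real.log (σ p.2) ∂(P.prod μ) := integral_sub hadd hIlogsnd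
    have h2 : ∫ p : Ω × ℝ, (Real.log (D p) + Real.log (σ (f p))) ∂(P.prod μ)
        = (∫ p : Ω × ℝ, Real.log (D p) ∂(P.prod μ))
          + ∫ p : Ω × ℝ, Real.log (σ (f p)) ∂(P.prod μ) := integral_add hintD hIlogf
    show ∫ p : Ω × ℝ, (Real.log (D p) + Real.log (σ (f p)) - Real.log (σ p.2)) ∂(P.prod μ)
        = ∫ p : Ω × ℝ, Real.log (D p) ∂(P.prod μ)
    rw [h1, h2, hEf, hEsnd]
    ring
  have hWle : ∀ᵐ p ∂(P.prod μ),
      W p + 1 ≤ σ (f p) * D p / σ p.2 ∧ 0 ≤ σ (f p) * D p / σ p.2 := by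
    filter_upwards [hae_mem, hae_σpos_snd, hae_σpos_f] with p hps hp2 hpf
    have hd : 0 < D p := by
      obtain ⟨ω, x⟩ := p
      rw [hDeq ω x hps]
      exact hpos ω x hps
    have ht : 0 < σ (f p) * D p / σ p.2 := div_pos (mul_pos hpf hd) hp2
    have hlog := Real.log_le_sub_one_of_pos ht
    have hlogt : Real.log (σ (f p) * D p / σ p.2)
        = Real.log (σ (f p)) + Real.log (D p) - Real.log (σ p.2) := by
      rw [Real.log_div (by positivity) hp2.ne', Real.log_mul hpf.ne' hd.ne']
    constructor
    · rw [hW_def]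
      simp only []
      linarith
    · exact ht.le
  have hconst : Integrable (fun _ : Ω × ℝ => (1:ℝ)) (P.prod μ) := integrable_const 1
  have hfinal : ∫ p, W p ∂(P.prod μ) + 1 ≤ 1 := by
    have h1 : ∫ p, (W p + 1) ∂(P.prod μ) = ∫ p, W p ∂(P.prod μ) + 1 := by
      rw [integral_add hWint hconst, integral_const]
      simp
    have h2 : ∫ p, (W p + 1) ∂(P.prod μ) ≤ ∫ p, max (W p + 1) 0 ∂(P.prod μ) :=
      integral_mono (hWint.add hconst) (hWint.add hconst).pos_part
        (fun p => le_max_left _ _)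
    have h3 : ∫ p, max (W p + 1) 0 ∂(P.prod μ)
        = (∫⁻ p, ENNReal.ofReal (max (W p + 1) 0) ∂(P.prod μ)).toReal :=
      integral_eq_lintegral_of_nonneg_ae (ae_of_all _ fun p => le_max_right _ _)
        ((hWint.add hconst).pos_part).aestronglyMeasurable
    have h4 : ∫⁻ p, ENNReal.ofReal (max (W p + 1) 0) ∂(P.prod μ)
        ≤ ∫⁻ p : Ω × ℝ, ENNReal.ofReal (σ (f p) * D p / σ p.2) ∂(P.prod μ) := by
      apply lintegral_mono_ae
      filter_upwards [hWle] with p hp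
      exact ENNReal.ofReal_le_ofReal (max_le hp.1 hp.2)
    have h5 : (∫⁻ p, ENNReal.ofReal (max (W p + 1) 0) ∂(P.prod μ)).toReal
        ≤ (1 : ℝ≥0∞).toReal :=
      ENNReal.toReal_mono (by norm_num) (le_trans h4 hT)
    calc ∫ p, W p ∂(P.prod μ) + 1 = ∫ p, (W p + 1) ∂(P.prod μ) := h1.symm
      _ ≤ ∫ p, max (W p + 1) 0 ∂(P.prod μ) := h2
      _ = (∫⁻ p, ENNReal.ofReal (max (W p + 1) 0) ∂(P.prod μ)).toReal := h3
      _ ≤ 1 := by simpa using h5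
  rw [hEint, ← hWeq]
  linarith
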